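/- Suppose n is even and 2 ≤ n ≤ 2g−2, and let J ⊆ E be the ideal generated by the Macdonald relations of weight n+1 with q = 0. Then for every nonzero integer m, the element m·(y − x_1x'_1)(y − x_2x'_2)⋯(y − x_{n/2}x'_{n/2})·y does not belong to J; in particular (y − x_1x'_1)⋯(y − x_{n/2}x'_{n/2})·y ∉ J, so this generator cannot be removed from the generating set of I_Mac. -/

import Mathlib

noncomputable section

open Polynomial

/-- The free graded-commutative ring `E = Λ_ℤ⟨x₁,…,x_g,x'₁,…,x'_g⟩ ⊗ ℤ[y]`,
realized as the exterior algebra over `ℤ[y]` on a free module of rank `2g`. -/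
abbrev E (g : ℕ) : Type :=
  ExteriorAlgebra (Polynomial ℤ) ((Fin g ⊕ Fin g) → Polynomial ℤ)

/-- The degree-one generator `x_i`. -/
def x (g : ℕ) (i : Fin g) : E g :=
  ExteriorAlgebra.ι (Polynomial ℤ) (Pi.single (Sum.inl i) 1)

/-- The degree-one generator `x'_i`. -/
def x' (g : ℕ) (i : Fin g) : E g :=
  ExteriorAlgebra.ι (Polynomial ℤ) (Pi.single (Sum.inr i) 1)

/-- The degree-two polynomial generator `y`. -/
def y (g : ℕ) : E g :=
  algebraMap (Polynomial ℤ) (E g) Polynomial.X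

/-- The Macdonald relation `x_{i₁}⋯x_{i_a}·x'_{j₁}⋯x'_{j_b}·(y−x_{k₁}x'_{k₁})⋯(y−x_{k_c}x'_{k_c})·y^q`
associated to lists of indices `I, J, K` and `q : ℕ`. -/
def macRel (g : ℕ) (I J K : List (Fin g)) (q : ℕ) : E g :=
  (I.map (x g)).prod * (J.map (x' g)).prod *
    (K.map (fun k => y g - x g k * x' g k)).prod * (y g) ^ q

/-- The two-sided ideal `I_Mac` generated by all Macdonald relations of weight `n+1`. -/
def IMac (g n : ℕ) : TwoSidedIdeal (E g) :=
  TwoSidedIdeal.span {z : E g | ∃ (I J K : List (Fin g)) (q : ℕ),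
    (I ++ J ++ K).Nodup ∧ I.length + J.length + 2 * K.length + q = n + 1 ∧
    z = macRel g I J K q}

/-- The monomial `x_A x'_B y^q`. -/
def emonomial (g : ℕ) (A B : Finset (Fin g)) (q : ℕ) : E g :=
  ((A.sort (· ≤ ·)).map (x g)).prod * ((B.sort (· ≤ ·)).map (x' g)).prod * (y g) ^ q

/-- The degree-`s` homogeneous component `E^s`, the ℤ-span of the monomials of degree `s`. -/
def Ecomp (g s : ℕ) : Submodule ℤ (E g) :=
  Submodule.span ℤ {z : E g | ∃ (A B : Finset (Fin g)) (q : ℕ),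
    A.card + B.card + 2 * q = s ∧ z = emonomial g A B q}


/-- The augmentation `E g → ℤ[y]` sending all exterior generators to `0` and `y` to `X`. -/
def aug (g : ℕ) : E g →ₐ[Polynomial ℤ] Polynomial ℤ :=
  ExteriorAlgebra.algebraMapInv

@[simp] lemma aug_x (g : ℕ) (i : Fin g) : aug g (x g i) = 0 := by
  simp [aug, x, ExteriorAlgebra.algebraMapInv, ExteriorAlgebra.lift_ι_apply]

@[simp] lemma aug_x' (g : ℕ) (i : Fin g) : aug g (x' g i) = 0 := by
  simp [aug, x', ExteriorAlgebra.algebraMapInv, ExteriorAlgebra.lift_ι_apply]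

@[simp] lemma aug_y (g : ℕ) : aug g (y g) = Polynomial.X := by
  simp [aug, y, ExteriorAlgebra.algebraMap_leftInverse _ Polynomial.X]

/-- For even `2 ≤ n ≤ 2g − 2`, no nonzero integer multiple of
`(y − x₁x'₁)⋯(y − x_{n/2}x'_{n/2})·y` lies in the ideal `J` generated by the Macdonald
relations of weight `n+1` with `q = 0`; in particular this generator cannot be removed. -/
theorem extra_generator_not_in_q_zero_ideal (g n : ℕ) (hg : 1 ≤ g) (heven : Even n)
    (h2 : 2 ≤ n) (h2g : n ≤ 2 * g - 2) (m : ℤ) (hm : m ≠ 0) :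
    m • macRel g [] [] ((List.finRange g).take (n / 2)) 1 ∉
      TwoSidedIdeal.span {z : E g | ∃ (I J K : List (Fin g)),
        (I ++ J ++ K).Nodup ∧ I.length + J.length + 2 * K.length = n + 1 ∧
        z = macRel g I J K 0} := by
  have key : ∀ (L : List (Fin g)) (f : Fin g → E g), (∀ i, aug g (f i) = 0) → L ≠ [] →
      aug g ((L.map f).prod) = 0 := by
    intro L f hf hL
    rw [map_list_prod, List.map_map]
    apply List.prod_eq_zero
    rcases L with _ | ⟨a, L⟩
    · exact absurd rfl hL
    · exact List.mem_map.mpr ⟨a, List.mem_cons_self, hf a⟩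
  intro hmem
  have hker : m • macRel g [] [] ((List.finRange g).take (n / 2)) 1 ∈
      TwoSidedIdeal.ker (aug g : E g →+* Polynomial ℤ) := by
    refine TwoSidedIdeal.mem_span_iff.mp hmem _ ?_
    rintro z ⟨I, J, K, -, hlen, rfl⟩
    rw [SetLike.mem_coe, TwoSidedIdeal.mem_ker]
    have hIJ : I.length + J.length ≠ 0 := by
      intro h0
      have hpar : ¬ Even (n + 1) := by simp [Nat.even_add_one, heven]
      exact hpar (hlen ▸ (⟨K.length, by omega⟩ : Even (I.length + J.length + 2 * K.length)))
    have hI : (aug g) ((I.map (x g)).prod) * (aug g) ((J.map (x' g)).prod) = 0 := by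
      by_cases hIe : I = []
      · subst hIe
        rw [key J (x' g) (aug_x' g) (by rintro rfl; simp at hIJ), mul_zero]
      · rw [key I (x g) (aug_x g) hIe, zero_mul]
    show (aug g) (macRel g I J K 0) = 0
    unfold macRel
    simp only [map_mul]
    rw [hI]
    ring
  rw [TwoSidedIdeal.mem_ker] at hker
  replace hker : (aug g) (m • macRel g [] [] ((List.finRange g).take (n / 2)) 1) = 0 := hker
  apply hm
  have haug : (aug g) (m • macRel g [] [] ((List.finRange g).take (n / 2)) 1) =
      m • (Polynomial.X ^ ((List.finRange g).take (n / 2)).length * Polynomial.X) := by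
    unfold macRel
    simp only [map_zsmul, map_smul, map_mul, map_pow, List.map_nil, List.prod_nil, map_one, one_mul,
      pow_one, aug_y]
    congr 2
    rw [map_list_prod, List.map_map]
    rw [show (⇑(aug g) ∘ fun k : Fin g => y g - x g k * x' g k)
        = fun _ : Fin g => (Polynomial.X : Polynomial ℤ) from
      funext fun k => by simp [Function.comp, map_sub]]
    simp [List.map_const', List.prod_replicate]
  rw [haug] at hker
  have hX : (Polynomial.X : Polynomial ℤ) ^ ((List.finRange g).take (n / 2)).length *
      Polynomial.X ≠ 0 :=
    mul_ne_zero (pow_ne_zero _ Polynomial.X_ne_zero) Polynomial.X_ne_zero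
  rcases smul_eq_zero.mp hker with h | h
  · exact h
  · exact absurd h hX
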